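/- If X ⊆ ℤ⁺ satisfies ∑_{x ∈ X} 1/x = ∞, then X gets arbitrarily close to arbitrarily long arithmetic progressions: for all k ∈ ℕ and ε > 0 there exists an arithmetic progression P of length k and gap Δ > 0 such that sup_{p ∈ P} inf_{x ∈ X} |p − x| ≤ εΔ. -/

import Mathlib

set_option maxHeartbeats 1000000 in
/-- If the reciprocal sum of X diverges, then X gets arbitrarily close to
arbitrarily long arithmetic progressions. -/
theorem closeToAPs_of_divergence (X : Set ℕ) (hX : ∀ x ∈ X, 0 < x)
    (hdiv : ¬ Summable (fun x : X => (1 : ℝ) / (x : ℕ))) :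
    ∀ k : ℕ, ∀ ε : ℝ, 0 < ε → ∃ x Δ : ℝ, 0 < Δ ∧
      ∀ i : ℕ, i < k →
        sInf {d : ℝ | ∃ y ∈ X, d = |x + i * Δ - (y : ℝ)|} ≤ ε * Δ := by
  classical
  intro k ε hε
  -- It suffices to prove the statement for length k + 2.
  suffices h : ∃ x Δ : ℝ, 0 < Δ ∧ ∀ i : ℕ, i < k + 2 →
      sInf {d : ℝ | ∃ y ∈ X, d = |x + i * Δ - (y : ℝ)|} ≤ ε * Δ by
    obtain ⟨x, Δ, hΔ, hap⟩ := h
    exact ⟨x, Δ, hΔ, fun i hi => hap i (by omega)⟩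
  by_contra hcon
  push_neg at hcon
  -- Key consequence: every candidate AP has a point far from all of X.
  have key : ∀ (x Δ : ℝ), 0 < Δ → ∃ i, i < k + 2 ∧ ∀ y ∈ X, ε * Δ < |x + i * Δ - (y : ℝ)| := by
    intro x Δ hΔ
    obtain ⟨i, hi, hlt⟩ := hcon x Δ hΔ
    refine ⟨i, hi, fun y hy => lt_of_lt_of_le hlt (csInf_le ⟨0, ?_⟩ ⟨y, hy, rfl⟩)⟩
    rintro d ⟨z, hz, rfl⟩
    exact abs_nonneg _
  set r : ℕ := ⌈1 / ε⌉₊ with hrdef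
  have hr0 : 0 < r := Nat.ceil_pos.mpr (by positivity)
  have hεr : 1 ≤ ε * r := by
    have h1 := Nat.le_ceil (1 / ε)
    rw [← hrdef] at h1
    calc (1 : ℝ) = ε * (1 / ε) := by field_simp
    _ ≤ ε * r := by nlinarith
  set s : ℕ := (k + 2) * r with hsdef
  have hs0 : 0 < s := by positivity
  have hs2 : 2 ≤ s := by
    calc 2 = 2 * 1 := by ring
    _ ≤ (k + 2) * r := Nat.mul_le_mul (by omega) hr0
  set M : ℕ := (k + 1) * r with hMdef
  -- Interval decomposition lemma.
  have decomp : ∀ (a m q : ℕ), 0 < q →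
      Finset.Ico a (a + m * q) =
        (Finset.range m).biUnion (fun c => Finset.Ico (a + c * q) (a + c * q + q)) := by
    intro a m q hq
    ext n
    simp only [Finset.mem_Ico, Finset.mem_biUnion, Finset.mem_range]
    constructor
    · rintro ⟨h1, h2⟩
      refine ⟨(n - a) / q, ?_, ?_, ?_⟩
      · exact (Nat.div_lt_iff_lt_mul hq).mpr (by omega)
      · have := Nat.div_mul_le_self (n - a) q
        omega
      · have := Nat.lt_div_mul_add (a := n - a) hq
        omega
    · rintro ⟨c, hc, h1, h2⟩
      have h3 : c * q + q ≤ m * q := by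
        calc c * q + q = (c + 1) * q := by ring
        _ ≤ m * q := Nat.mul_le_mul_right q (by omega)
      omega
  -- Main counting lemma.
  have count : ∀ t a : ℕ,
      ((Finset.Ico a (a + s ^ t)).filter (· ∈ X)).card ≤ M ^ t := by
    intro t
    induction t with
    | zero =>
      intro a
      calc ((Finset.Ico a (a + s ^ 0)).filter (· ∈ X)).card
          ≤ (Finset.Ico a (a + s ^ 0)).card := Finset.card_filter_le _ _
        _ ≤ 1 := by simp
        _ = M ^ 0 := by simp
    | succ t ih =>
      intro a
      have hq : 0 < s ^ t := pow_pos hs0 t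
      have hsplit : a + s ^ (t + 1) = a + s * s ^ t := by rw [pow_succ, mul_comm]
      rw [hsplit, decomp a s (s ^ t) hq, Finset.filter_biUnion]
      refine le_trans Finset.card_biUnion_le ?_
      set g : ℕ → ℕ :=
        fun c => ((Finset.Ico (a + c * s ^ t) (a + c * s ^ t + s ^ t)).filter (· ∈ X)).card
        with hgdef
      set occ : Finset ℕ := (Finset.range s).filter (fun c => g c ≠ 0) with hoccdef
      have hsum : ∑ c ∈ Finset.range s, g c = ∑ c ∈ occ, g c := by
        rw [hoccdef]
        exact (Finset.sum_filter_ne_zero _).symm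
      have hocc : occ.card ≤ (k + 1) * r := by
        have himg : occ.image (· % r) ⊆ Finset.range r := by
          intro u hu
          simp only [Finset.mem_image] at hu
          obtain ⟨c, _, rfl⟩ := hu
          exact Finset.mem_range.mpr (Nat.mod_lt _ hr0)
        have hfib : ∀ u ∈ occ.image (· % r),
            (occ.filter (fun c => c % r = u)).card ≤ k + 1 := by
          intro u _
          have hΔpos : (0:ℝ) < (r : ℝ) * (s:ℝ) ^ t := by positivity
          obtain ⟨i₀, hi₀K, hfar⟩ :=
            key ((a : ℝ) + (u : ℝ) * (s:ℝ) ^ t) ((r : ℝ) * (s:ℝ) ^ t) hΔpos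
          have hcard : ((Finset.range (k + 2)).erase i₀).card = k + 1 := by
            rw [Finset.card_erase_of_mem (Finset.mem_range.mpr hi₀K), Finset.card_range]
            omega
          rw [← hcard]
          apply Finset.card_le_card_of_injOn (fun c => c / r)
          · intro c hc
            simp only [Finset.mem_coe, Finset.mem_filter] at hc
            obtain ⟨hcocc, hcu⟩ := hc
            rw [hoccdef, Finset.mem_filter, Finset.mem_range] at hcocc
            obtain ⟨hcs, hg⟩ := hcocc
            have hcKr : c < (k + 2) * r := by rw [hsdef] at hcs; exact hcs
            have hdivK : c / r < k + 2 := (Nat.div_lt_iff_lt_mul hr0).mpr hcKr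
            refine Finset.mem_erase.mpr ⟨?_, Finset.mem_range.mpr hdivK⟩
            intro (hdiv0 : c / r = i₀)
            -- then c = r * i₀ + u and the occupied cell contradicts hfar
            have hc_eq : c = r * i₀ + u := by
              have hdm := Nat.div_add_mod c r
              rw [hdiv0, hcu] at hdm
              omega
            have hpos : 0 < g c := Nat.pos_of_ne_zero hg
            rw [hgdef] at hpos
            obtain ⟨n, hn⟩ := Finset.card_pos.mp hpos
            rw [Finset.mem_filter, Finset.mem_Ico] at hn
            obtain ⟨⟨hn1, hn2⟩, hnX⟩ := hn
            have habs := hfar n hnX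
            rw [hc_eq] at hn1 hn2
            have hn1' : (a : ℝ) + ((r:ℝ) * i₀ + u) * (s:ℝ)^t ≤ (n:ℝ) := by
              exact_mod_cast Nat.cast_le.mpr hn1
            have hn2' : (n : ℝ) < (a : ℝ) + ((r:ℝ) * i₀ + u) * (s:ℝ)^t + (s:ℝ)^t := by
              exact_mod_cast Nat.cast_lt.mpr hn2
            have hzabs : |(a : ℝ) + (u : ℝ) * (s:ℝ)^t + (i₀ : ℝ) * ((r:ℝ) * (s:ℝ)^t) - (n:ℝ)|
                < (s:ℝ)^t := by
              rw [abs_lt]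
              constructor <;> nlinarith [hn1', hn2']
            have hst : (s:ℝ)^t ≤ ε * ((r:ℝ) * (s:ℝ)^t) := by
              have hp : (0:ℝ) < (s:ℝ)^t := by positivity
              nlinarith [hεr]
            linarith
          · intro c₁ hc₁ c₂ hc₂ hdiveq
            simp only [Finset.coe_filter, Set.mem_setOf_eq] at hc₁ hc₂
            have hd : c₁ / r = c₂ / r := hdiveq
            have e₁ := Nat.div_add_mod c₁ r
            have e₂ := Nat.div_add_mod c₂ r
            rw [hc₁.2] at e₁
            rw [hc₂.2] at e₂
            rw [← e₁, ← e₂, hd]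
        calc occ.card ≤ (k + 1) * (occ.image (· % r)).card :=
              Finset.card_le_mul_card_image occ (k + 1) hfib
          _ ≤ (k + 1) * r := by
              have := Finset.card_le_card himg
              rw [Finset.card_range] at this
              exact Nat.mul_le_mul_left _ this
      calc ∑ c ∈ Finset.range s, g c = ∑ c ∈ occ, g c := hsum
        _ ≤ occ.card • M ^ t := Finset.sum_le_card_nsmul _ _ _ (fun c _ => ih (a + c * s ^ t))
        _ = occ.card * M ^ t := by rw [smul_eq_mul]
        _ ≤ ((k + 1) * r) * M ^ t := Nat.mul_le_mul_right _ hocc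
        _ = M ^ (t + 1) := by rw [hMdef, pow_succ]; ring
  -- Now show summability, contradicting hdiv.
  set F : ℕ → ℝ := X.indicator (fun n : ℕ => (1:ℝ) / n) with hFdef
  set xq : ℝ := ((k:ℝ) + 1) / ((k:ℝ) + 2) with hxqdef
  have hxq0 : 0 ≤ xq := by rw [hxqdef]; positivity
  have hFnonneg : ∀ n, 0 ≤ F n := fun n => Set.indicator_nonneg (fun m _ => by positivity) n
  have hdisj : ∀ (A q m : ℕ), (↑(Finset.range m) : Set ℕ).PairwiseDisjoint
      (fun c => Finset.Ico (A + c * q) (A + c * q + q)) := by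
    intro A q m c _ c' _ hne
    apply Finset.disjoint_left.mpr
    intro n hn hn'
    simp only [Finset.mem_Ico] at hn hn'
    rcases Nat.lt_or_ge c c' with h | h
    · have h2 : (c + 1) * q ≤ c' * q := Nat.mul_le_mul_right q h
      rw [Nat.succ_mul] at h2
      omega
    · have hlt : c' < c := by omega
      have h2 : (c' + 1) * q ≤ c * q := Nat.mul_le_mul_right q hlt
      rw [Nat.succ_mul] at h2
      omega
  have hsub : ∀ T A : ℕ, s ^ T ≤ A →
      ∑ n ∈ Finset.Ico A (A + s ^ T), F n ≤ (M:ℝ) ^ T / (s:ℝ) ^ T := by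
    intro T A hA
    have hsp : (0:ℝ) < (s:ℝ) ^ T := by positivity
    have heq : ∑ n ∈ Finset.Ico A (A + s ^ T), F n
        = ∑ n ∈ (Finset.Ico A (A + s ^ T)).filter (· ∈ X), (1:ℝ) / n := by
      rw [Finset.sum_filter]
      refine Finset.sum_congr rfl (fun n _ => ?_)
      by_cases hn : n ∈ X <;> simp [hFdef, Set.indicator, hn]
    rw [heq]
    have hterm : ∀ n ∈ (Finset.Ico A (A + s ^ T)).filter (· ∈ X),
        (1:ℝ) / n ≤ ((s:ℝ) ^ T)⁻¹ := by
      intro n hn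
      rw [Finset.mem_filter, Finset.mem_Ico] at hn
      have h1 : s ^ T ≤ n := le_trans hA hn.1.1
      have h1' : (s:ℝ) ^ T ≤ (n:ℝ) := by exact_mod_cast h1
      rw [one_div]
      exact inv_anti₀ hsp h1'
    calc ∑ n ∈ (Finset.Ico A (A + s ^ T)).filter (· ∈ X), (1:ℝ) / n
        ≤ ((Finset.Ico A (A + s ^ T)).filter (· ∈ X)).card • ((s:ℝ) ^ T)⁻¹ :=
          Finset.sum_le_card_nsmul _ _ _ hterm
      _ = (((Finset.Ico A (A + s ^ T)).filter (· ∈ X)).card : ℝ) * ((s:ℝ) ^ T)⁻¹ := by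
          rw [nsmul_eq_mul]
      _ ≤ (M:ℝ) ^ T * ((s:ℝ) ^ T)⁻¹ := by
          have hc : (((Finset.Ico A (A + s ^ T)).filter (· ∈ X)).card : ℝ) ≤ (M:ℝ) ^ T := by
            exact_mod_cast count T A
          have hinv : (0:ℝ) ≤ ((s:ℝ) ^ T)⁻¹ := by positivity
          nlinarith
      _ = (M:ℝ) ^ T / (s:ℝ) ^ T := by rw [div_eq_mul_inv]
  have hinc : ∀ T : ℕ, ∑ n ∈ Finset.Ico (s ^ T) (s ^ (T + 1)), F n ≤ (s:ℝ) * xq ^ T := by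
    intro T
    have hq : 0 < s ^ T := pow_pos hs0 T
    have h1 : s ^ T + (s - 1) * s ^ T = s ^ (T + 1) := by
      have h2 : 1 + (s - 1) = s := by omega
      calc s ^ T + (s - 1) * s ^ T = (1 + (s - 1)) * s ^ T := by ring
        _ = s * s ^ T := by rw [h2]
        _ = s ^ (T + 1) := by rw [pow_succ, mul_comm]
    rw [← h1, decomp (s ^ T) (s - 1) (s ^ T) hq, Finset.sum_biUnion (hdisj _ _ _)]
    have hratio : (M:ℝ) ^ T / (s:ℝ) ^ T = xq ^ T := by
      rw [← div_pow]
      congr 1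
      rw [hMdef, hsdef, hxqdef]
      push_cast
      have hrr : (r:ℝ) ≠ 0 := by positivity
      field_simp
    calc ∑ c ∈ Finset.range (s - 1),
          ∑ n ∈ Finset.Ico (s ^ T + c * s ^ T) (s ^ T + c * s ^ T + s ^ T), F n
        ≤ (Finset.range (s - 1)).card • ((M:ℝ) ^ T / (s:ℝ) ^ T) := by
          refine Finset.sum_le_card_nsmul _ _ _ (fun c _ => ?_)
          exact hsub T (s ^ T + c * s ^ T) (Nat.le_add_right _ _)
      _ = ((s - 1 : ℕ):ℝ) * xq ^ T := by rw [Finset.card_range, nsmul_eq_mul, hratio]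
      _ ≤ (s:ℝ) * xq ^ T := by
          have h3 : ((s - 1 : ℕ):ℝ) ≤ (s:ℝ) := by exact_mod_cast Nat.sub_le s 1
          have h4 : (0:ℝ) ≤ xq ^ T := pow_nonneg hxq0 T
          nlinarith
  have main : ∀ T : ℕ, ∑ n ∈ Finset.range (s ^ T), F n
      ≤ (s:ℝ) * ((k:ℝ) + 2) - (s:ℝ) * ((k:ℝ) + 2) * xq ^ T := by
    intro T
    induction T with
    | zero =>
      have hF0 : F 0 = 0 := by
        by_cases h0 : (0:ℕ) ∈ X <;> simp [hFdef, Set.indicator, h0]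
      simp [hF0]
    | succ T ih =>
      have hle1 : s ^ T ≤ s ^ (T + 1) := Nat.pow_le_pow_right (by omega) (by omega)
      have hsplit2 : ∑ n ∈ Finset.range (s ^ (T + 1)), F n
          = ∑ n ∈ Finset.range (s ^ T), F n + ∑ n ∈ Finset.Ico (s ^ T) (s ^ (T + 1)), F n := by
        rw [Finset.range_eq_Ico, Finset.range_eq_Ico]
        exact (Finset.sum_Ico_consecutive F (Nat.zero_le _) hle1).symm
      rw [hsplit2]
      have hincT := hinc T
      have hkk : ((k:ℝ) + 2) * xq = (k:ℝ) + 1 := by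
        rw [hxqdef]; field_simp
      have hkey : (s:ℝ) * ((k:ℝ) + 2) * xq ^ (T + 1) = (s:ℝ) * ((k:ℝ) + 1) * xq ^ T := by
        rw [pow_succ]
        linear_combination ((s:ℝ) * xq ^ T) * hkk
      linarith [ih, hincT, hkey]
  have hb : ∀ N : ℕ, ∑ n ∈ Finset.range N, F n ≤ (s:ℝ) * ((k:ℝ) + 2) := by
    intro N
    have hsubN : Finset.range N ⊆ Finset.range (s ^ N) :=
      Finset.range_subset_range.mpr (le_of_lt (Nat.lt_pow_self (by omega)))
    refine le_trans (Finset.sum_le_sum_of_subset_of_nonneg hsubN (fun n _ _ => hFnonneg n)) ?_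
    refine le_trans (main N) ?_
    have h5 : (0:ℝ) ≤ (s:ℝ) * ((k:ℝ) + 2) * xq ^ N := by
      have := pow_nonneg hxq0 N
      positivity
    linarith
  have hsummable : Summable F := summable_of_sum_range_le hFnonneg hb
  exact hdiv ((summable_subtype_iff_indicator (f := fun n : ℕ => (1:ℝ) / n)).mpr hsummable)
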